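/- Define the relation E^λ ↭_L w to mean c_{w,λ}^{ij} ≠ 0 for some i,j, and build a graph on W joining x ≠ y when some λ satisfies E^λ ↭_L x and E^λ ↭_L y; call the connected components L-blocks. For an L-block 𝓕, the span J̃_𝓕 := span_F{t_w : w ∈ 𝓕} is a two-sided ideal of J̃, and J̃ = ⊕_𝓕 J̃_𝓕 as a direct sum of two-sided ideals over all L-blocks 𝓕. -/

import Mathlib

open scoped Classical

/-- Schur orthogonality relations for leading matrix coefficients. -/
def SchurRelations {F W Λ : Type*} [Field F] [Fintype W] [DecidableEq Λ]
    (inv : W → W) (d : Λ → ℕ) (f : Λ → F) (c : W → Λ → ℕ → ℕ → F) : Prop :=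
  ∀ (l m : Λ) (i j k kl : ℕ), i < d l → j < d l → k < d m → kl < d m →
    ∑ w : W, c w l i j * c (inv w) m k kl =
      if l = m ∧ i = kl ∧ j = k then f l else 0

/-- The structure constants γ̃_{x,y,z}. -/
noncomputable def gammaC {F W Λ : Type*} [Field F] [Fintype Λ]
    (d : Λ → ℕ) (f : Λ → F) (c : W → Λ → ℕ → ℕ → F) (x y z : W) : F :=
  ∑ l : Λ, (f l)⁻¹ *
    ∑ i ∈ Finset.range (d l), ∑ j ∈ Finset.range (d l), ∑ k ∈ Finset.range (d l),
      c x l i j * c y l j k * c z l k i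

/-- The coefficients ñ_w. -/
noncomputable def nC {F W Λ : Type*} [Field F] [Fintype Λ]
    (inv : W → W) (d : Λ → ℕ) (f : Λ → F) (c : W → Λ → ℕ → ℕ → F) (w : W) : F :=
  ∑ l : Λ, (f l)⁻¹ * ∑ i ∈ Finset.range (d l), c (inv w) l i i

/-- Functions vanishing on a set, as a submodule. -/
def vanishOn {F W : Type*} [Field F] (S : Set W) : Submodule F (W → F) where
  carrier := {v | ∀ w ∈ S, v w = 0}
  add_mem' := by intro a b ha hb w hw; simp [ha w hw, hb w hw]
  zero_mem' := by intro w _; rfl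
  smul_mem' := by intro r v hv w hw; simp [hv w hw]

lemma mem_vanishOn {F W : Type*} [Field F] {S : Set W} {v : W → F} :
    v ∈ vanishOn (F := F) S ↔ ∀ w ∈ S, v w = 0 := Iff.rfl

lemma span_single_eq {F W Q : Type*} [Field F] [Fintype W] [DecidableEq W]
    (π : W → Q) (q : Q) :
    Submodule.span F {v : W → F | ∃ u, π u = q ∧ v = Pi.single u 1}
      = vanishOn {w | π w ≠ q} := by
  apply le_antisymm
  · rw [Submodule.span_le]
    rintro v ⟨u, hu, rfl⟩ w hw
    have : w ≠ u := fun h => hw (h ▸ hu)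
    simp [Pi.single_eq_of_ne this]
  · intro v hv
    have hrep : v = ∑ w : W, v w • (Pi.single w 1 : W → F) := by
      ext x
      simp [Finset.sum_apply, Pi.single_apply]
    rw [hrep]
    refine Submodule.sum_mem _ (fun w _ => ?_)
    by_cases hq : π w = q
    · exact Submodule.smul_mem _ _ (Submodule.subset_span ⟨w, hq, rfl⟩)
    · have : v w = 0 := hv w hq
      simp [this]

/-- with E^λ ↭_L w expressed by `Rel`, the graph relation `step`,
and L-blocks the connected components (classes of the equivalence generated by
`step`), the span J̃_𝓕 of {t_w : w ∈ 𝓕} is a two-sided ideal of J̃ for each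
L-block 𝓕, and J̃ decomposes as the internal direct sum of the J̃_𝓕. -/
theorem Lblocks_ideal_decomposition
    {F W Λ : Type*} [Field F] [Fintype W] [DecidableEq W] [Fintype Λ]
    (inv : W → W) (hinv : Function.Involutive inv)
    (d : Λ → ℕ) (f : Λ → F) (c : W → Λ → ℕ → ℕ → F)
    (Rel : Λ → W → Prop)
    (hRel : ∀ l w, Rel l w ↔ ∃ i, i < d l ∧ ∃ jj, jj < d l ∧ c w l i jj ≠ 0)
    (hsym : ∀ l w, Rel l w ↔ Rel l (inv w))
    (step : W → W → Prop)
    (hstep : ∀ x y, step x y ↔ ∃ l, Rel l x ∧ Rel l y)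
    (mul : (W → F) → (W → F) → (W → F))
    (hmul : ∀ a b z, mul a b z = ∑ x : W, ∑ y : W, a x * b y * gammaC d f c x y (inv z))
    (fam : Quotient (Relation.EqvGen.setoid step) → Submodule F (W → F))
    (hfam : ∀ q, fam q = Submodule.span F
      {v | ∃ u : W, Quotient.mk (Relation.EqvGen.setoid step) u = q ∧ v = Pi.single u 1}) :
    (∀ (q : Quotient (Relation.EqvGen.setoid step)) (a b : W → F),
      a ∈ fam q → mul a b ∈ fam q ∧ mul b a ∈ fam q) ∧
    DirectSum.IsInternal fam := by
  set π : W → Quotient (Relation.EqvGen.setoid step) :=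
    Quotient.mk (Relation.EqvGen.setoid step) with hπ
  have hq : ∀ q, fam q = vanishOn {w | π w ≠ q} := fun q =>
    (hfam q).trans (span_single_eq π q)
  -- key gamma lemma
  have hγ : ∀ x y z : W, gammaC d f c x y (inv z) ≠ 0 → π x = π z ∧ π y = π z := by
    intro x y z hg
    unfold gammaC at hg
    obtain ⟨l, -, hl⟩ := Finset.exists_ne_zero_of_sum_ne_zero hg
    obtain ⟨i, hi, hi'⟩ := Finset.exists_ne_zero_of_sum_ne_zero (right_ne_zero_of_mul hl)
    obtain ⟨j, hj, hj'⟩ := Finset.exists_ne_zero_of_sum_ne_zero hi'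
    obtain ⟨k, hk, hk'⟩ := Finset.exists_ne_zero_of_sum_ne_zero hj'
    have hx : c x l i j ≠ 0 := fun h => hk' (by simp [h])
    have hy : c y l j k ≠ 0 := fun h => hk' (by simp [h])
    have hz : c (inv z) l k i ≠ 0 := fun h => hk' (by simp [h])
    have Relx : Rel l x := (hRel l x).mpr
      ⟨i, Finset.mem_range.mp hi, j, Finset.mem_range.mp hj, hx⟩
    have Rely : Rel l y := (hRel l y).mpr
      ⟨j, Finset.mem_range.mp hj, k, Finset.mem_range.mp hk, hy⟩
    have Relz : Rel l z := (hsym l z).mpr ((hRel l (inv z)).mpr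
      ⟨k, Finset.mem_range.mp hk, i, Finset.mem_range.mp hi, hz⟩)
    exact ⟨Quotient.sound (Relation.EqvGen.rel _ _ ((hstep x z).mpr ⟨l, Relx, Relz⟩)),
      Quotient.sound (Relation.EqvGen.rel _ _ ((hstep y z).mpr ⟨l, Rely, Relz⟩))⟩
  constructor
  · intro q a b ha
    rw [hq q] at ha ⊢
    constructor
    · intro z hz
      rw [hmul]
      refine Finset.sum_eq_zero fun x _ => Finset.sum_eq_zero fun y _ => ?_
      by_cases hax : a x = 0
      · simp [hax]
      by_cases hγ0 : gammaC d f c x y (inv z) = 0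
      · simp [hγ0]
      exfalso
      have hπx : π x = q := by by_contra h; exact hax (ha x h)
      exact hz ((hγ x y z hγ0).1 ▸ hπx)
    · intro z hz
      rw [hmul]
      refine Finset.sum_eq_zero fun x _ => Finset.sum_eq_zero fun y _ => ?_
      by_cases hay : a y = 0
      · simp [hay]
      by_cases hγ0 : gammaC d f c x y (inv z) = 0
      · simp [hγ0]
      exfalso
      have hπy : π y = q := by by_contra h; exact hay (ha y h)
      exact hz ((hγ x y z hγ0).2 ▸ hπy)
  · rw [DirectSum.isInternal_submodule_iff_iSupIndep_and_iSup_eq_top]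
    constructor
    · intro q
      rw [Submodule.disjoint_def]
      intro v hv1 hv2
      rw [hq q] at hv1
      have hle : (⨆ (j) (_ : j ≠ q), fam j) ≤ vanishOn {w | π w = q} := by
        refine iSup₂_le fun j hj => ?_
        rw [hq j]
        intro u hu w hw
        exact hu w (by rw [Set.mem_setOf_eq] at hw ⊢; rw [hw]; exact Ne.symm hj)
      have hv2' := hle hv2
      funext w
      by_cases h : π w = q
      · exact hv2' w h
      · exact hv1 w h
    · rw [eq_top_iff]
      intro v _
      have hrep : v = ∑ w : W, v w • (Pi.single w 1 : W → F) := by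
        ext x
        simp [Finset.sum_apply, Pi.single_apply]
      rw [hrep]
      refine Submodule.sum_mem _ fun w _ => ?_
      refine Submodule.mem_iSup_of_mem (π w) ?_
      rw [hfam]
      exact Submodule.smul_mem _ _ (Submodule.subset_span ⟨w, rfl, rfl⟩)
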